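/- arXiv:1707.00349 — 3 statements merged into one kernel-verified Lean document; each statement's English description precedes it below -/
import Mathlib

section
/- Let G be a finite group and let S be a nonempty finite subset of G. Then there exists a finite subset T of G such that the pointwise product set S * T equals all of G, and the cardinality of T satisfies (|T| : ℝ) ≤ (Nat.card G) * Real.log (Nat.card G) / |S| + 1. -/
open Pointwise

private lemma covering_sum_lemma {G : Type*} [Group G] [Fintype G] [DecidableEq G]
    (S U : Finset G) :
    ∑ t : G, (U ∩ (S * {t})).card = S.card * U.card := by
  have h1 : ∀ t : G, (U ∩ (S * {t})).card = ∑ u ∈ U, if u ∈ S * {t} then 1 else 0 := by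
    intro t
    rw [Finset.sum_ite_mem]
    simp
  simp_rw [h1]
  rw [Finset.sum_comm]
  have h2 : ∀ u : G, ∑ t : G, (if u ∈ S * {t} then 1 else 0) = S.card := by
    intro u
    rw [Finset.sum_boole]
    have : Finset.univ.filter (fun t => u ∈ S * {t}) = S.image (fun s => s⁻¹ * u) := by
      ext t
      simp only [Finset.mem_filter, Finset.mem_univ, true_and, Finset.mem_image,
        Finset.mem_mul, Finset.mem_singleton]
      constructor
      · rintro ⟨s, hs, r, rfl, h⟩
        exact ⟨s, hs, by rw [← h]; group⟩
      · rintro ⟨s, hs, rfl⟩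
        exact ⟨s, hs, s⁻¹ * u, rfl, by group⟩
    norm_cast
    rw [this, Finset.card_image_of_injective _ (fun a b h => by simpa using h)]
  simp_rw [h2]
  simp [mul_comm]

private lemma covering_greedy {G : Type*} [Group G] [Fintype G] [DecidableEq G]
    (S : Finset G) (hS : S.Nonempty) :
    ∀ n : ℕ, ∀ U : Finset G, U.card ≤ n → U.Nonempty →
      ∃ T : Finset G, U ⊆ S * T ∧
        (T.card : ℝ) ≤ (Fintype.card G : ℝ) * Real.log U.card / S.card + 1 := by
  intro n
  induction n with
  | zero => intro U hU hUne; simp [Finset.card_eq_zero.mp (Nat.le_zero.mp hU)] at hUne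
  | succ n ih =>
    intro U hU hUne
    set N : ℕ := Fintype.card G with hN
    have hNpos : 0 < N := Fintype.card_pos
    have hspos : 0 < S.card := Finset.card_pos.mpr hS
    have hUpos : 0 < U.card := Finset.card_pos.mpr hUne
    -- pick the best translate
    obtain ⟨t, -, ht⟩ := Finset.exists_max_image Finset.univ
      (fun t : G => (U ∩ (S * {t})).card) ⟨1, Finset.mem_univ 1⟩
    have havg : S.card * U.card ≤ N * (U ∩ (S * {t})).card := by
      calc S.card * U.card = ∑ t' : G, (U ∩ (S * {t'})).card := (covering_sum_lemma S U).symm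
        _ ≤ ∑ _t' : G, (U ∩ (S * {t})).card :=
            Finset.sum_le_sum (fun i _ => ht i (Finset.mem_univ i))
        _ = N * (U ∩ (S * {t})).card := by simp [hN, mul_comm]
    have hcard' : (U \ (S * {t})).card + (U ∩ (S * {t})).card = U.card := by
      have h := Finset.card_filter_add_card_filter_not
        (s := U) (p := fun u => u ∈ S * {t})
      have h1 : U.filter (fun u => u ∈ S * {t}) = U ∩ (S * {t}) := by
        ext u; simp
      have h2 : U.filter (fun u => ¬ (fun u => u ∈ S * {t}) u) = U \ (S * {t}) := by
        ext u; simp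
      rw [h1, h2] at h
      omega
    have hftpos : 0 < (U ∩ (S * {t})).card := by
      have hpos : 0 < S.card * U.card := Nat.mul_pos hspos hUpos
      rcases Nat.eq_zero_or_pos (U ∩ (S * {t})).card with h | h
      · rw [h, Nat.mul_zero] at havg; omega
      · exact h
    have hU'lt : (U \ (S * {t})).card < U.card := by omega
    -- real-number inequality: |U'| ≤ |U| (1 - s/N)
    have hreal : ((U \ (S * {t})).card : ℝ) ≤ (U.card : ℝ) * (1 - (S.card : ℝ) / N) := by
      have hNr : (0 : ℝ) < N := by exact_mod_cast hNpos
      rw [← sub_nonneg]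
      have h1 : (U.card : ℝ) * (1 - (S.card : ℝ) / N) - (U \ (S * {t})).card
          = ((N : ℝ) * (U ∩ (S * {t})).card - S.card * U.card) / N := by
        have : ((U \ (S * {t})).card : ℝ) = (U.card : ℝ) - (U ∩ (S * {t})).card := by
          have := hcard'; push_cast [← this]; ring
        rw [this]; field_simp; ring
      rw [h1]
      apply div_nonneg _ hNr.le
      have : (S.card * U.card : ℝ) ≤ (N : ℝ) * (U ∩ (S * {t})).card := by exact_mod_cast havg
      linarith
    rcases Finset.eq_empty_or_nonempty (U \ (S * {t})) with hU'emp | hU'ne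
    · -- U' empty: T = {t}
      refine ⟨{t}, ?_, ?_⟩
      · intro u hu
        by_contra hmem
        have : u ∈ U \ (S * {t}) := Finset.mem_sdiff.mpr ⟨hu, hmem⟩
        rw [hU'emp] at this
        exact absurd this (Finset.notMem_empty u)
      · have hlog : 0 ≤ Real.log U.card := by
          apply Real.log_nonneg
          exact_mod_cast hUpos
        have : (0 : ℝ) ≤ (N : ℝ) * Real.log U.card / S.card := by positivity
        simp only [Finset.card_singleton, Nat.cast_one]
        linarith
    · have hle : (U \ (S * {t})).card ≤ n := by omega
      obtain ⟨T', hT'cov, hT'card⟩ := ih _ hle hU'ne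
      refine ⟨insert t T', ?_, ?_⟩
      · intro u hu
        by_cases hmem : u ∈ S * {t}
        · have : S * {t} ⊆ S * insert t T' :=
            Finset.mul_subset_mul_left (by simp)
          exact this hmem
        · have : u ∈ U \ (S * {t}) := Finset.mem_sdiff.mpr ⟨hu, hmem⟩
          exact Finset.mul_subset_mul_left (Finset.subset_insert t T') (hT'cov this)
      · have hU'pos : (0 : ℝ) < (U \ (S * {t})).card := by
          exact_mod_cast Finset.card_pos.mpr hU'ne
        have hUposR : (0 : ℝ) < U.card := by exact_mod_cast hUpos
        have hNr : (0 : ℝ) < N := by exact_mod_cast hNpos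
        have hsr : (0 : ℝ) < S.card := by exact_mod_cast hspos
        have hfrac : (0 : ℝ) < 1 - (S.card : ℝ) / N := by
          by_contra h
          push_neg at h
          nlinarith
        have hlog : Real.log (U \ (S * {t})).card ≤ Real.log U.card - (S.card : ℝ) / N := by
          calc Real.log (U \ (S * {t})).card ≤ Real.log ((U.card : ℝ) * (1 - (S.card : ℝ) / N)) :=
                Real.log_le_log hU'pos hreal
            _ = Real.log U.card + Real.log (1 - (S.card : ℝ) / N) :=
                Real.log_mul (ne_of_gt hUposR) (ne_of_gt hfrac)
            _ ≤ Real.log U.card + ((1 - (S.card : ℝ) / N) - 1) := by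
                linarith [Real.log_le_sub_one_of_pos hfrac]
            _ = Real.log U.card - (S.card : ℝ) / N := by ring
        have hTcard : ((insert t T').card : ℝ) ≤ (T'.card : ℝ) + 1 := by
          exact_mod_cast Finset.card_insert_le t T'
        calc ((insert t T').card : ℝ) ≤ (T'.card : ℝ) + 1 := hTcard
          _ ≤ (N : ℝ) * Real.log (U \ (S * {t})).card / S.card + 1 + 1 := by linarith
          _ ≤ (N : ℝ) * (Real.log U.card - (S.card : ℝ) / N) / S.card + 2 := by
              have hdiv : (N : ℝ) * Real.log (U \ (S * {t})).card / S.card ≤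
                  (N : ℝ) * (Real.log U.card - (S.card : ℝ) / N) / S.card := by
                gcongr
              linarith
          _ = (N : ℝ) * Real.log U.card / S.card + 1 := by field_simp; ring

theorem covering_by_translates {G : Type*} [Group G] [Fintype G] [DecidableEq G]
    (S : Finset G) (hS : S.Nonempty) :
    ∃ T : Finset G, S * T = Finset.univ ∧
      (T.card : ℝ) ≤ (Nat.card G : ℝ) * Real.log (Nat.card G) / S.card + 1 := by
  obtain ⟨T, hcov, hcard⟩ := covering_greedy S hS (Fintype.card G) Finset.univ
    (le_of_eq (Finset.card_univ)) Finset.univ_nonempty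
  refine ⟨T, Finset.univ_subset_iff.mp hcov, ?_⟩
  rw [Nat.card_eq_fintype_card]
  rwa [Finset.card_univ] at hcard
end

section
/- Let G be a finite solvable group and let a, b be coprime natural numbers with Nat.card G = a * b. Then there exist subgroups H and K of G with Nat.card H = a, Nat.card K = b, H ⊓ K = ⊥ (trivial intersection), and with pointwise product set ↑H * ↑K equal to all of G. -/
open Pointwise

universe u

lemma exists_normal_pgroup (G : Type u) [Group G] [Finite G] [Group.IsSolvable G] [Nontrivial G] :
    ∃ (p : ℕ) (N : Subgroup G), p.Prime ∧ N.Normal ∧ N ≠ ⊥ ∧ IsPGroup p N := by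
  classical
  obtain ⟨m, hm⟩ := Group.IsSolvable.solvable (G := G)
  have hex : ∃ k, derivedSeries G k = ⊥ := ⟨m, hm⟩
  set k := Nat.find hex with hkdef
  have hk : derivedSeries G k = ⊥ := Nat.find_spec hex
  have hk0 : k ≠ 0 := by
    intro h
    rw [h, derivedSeries_zero] at hk
    obtain ⟨x, hx⟩ := exists_ne (1 : G)
    exact hx (Subgroup.mem_bot.mp (hk ▸ Subgroup.mem_top x))
  set A := derivedSeries G (k - 1) with hAdef
  have hA : A ≠ ⊥ := Nat.find_min hex (Nat.sub_lt (Nat.pos_of_ne_zero hk0) one_pos)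
  have habel : ⁅A, A⁆ = ⊥ := by
    have := hk
    rw [show k = (k - 1) + 1 from (Nat.succ_pred_eq_of_pos (Nat.pos_of_ne_zero hk0)).symm,
      derivedSeries_succ] at this
    exact this
  have hcomm : ∀ x y : G, x ∈ A → y ∈ A → x * y = y * x := by
    intro x y hx hy
    have hle := Subgroup.commutator_eq_bot_iff_le_centralizer.mp habel
    have := hle hx
    rw [Subgroup.mem_centralizer_iff] at this
    exact (this y hy).symm
  haveI hAnorm : A.Normal := derivedSeries_normal G (k - 1)
  have hcard : 1 < Nat.card A := A.one_lt_card_iff_ne_bot.mpr hA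
  obtain ⟨p, hp, hpdvd⟩ := Nat.exists_prime_and_dvd (show Nat.card A ≠ 1 by omega)
  haveI : Fact p.Prime := ⟨hp⟩
  obtain ⟨P⟩ : Nonempty (Sylow p A) := inferInstance
  haveI hPnorm : P.Normal := by
    constructor
    intro n hn g
    have : g * n * g⁻¹ = n := by
      ext
      push_cast
      rw [hcomm (g : G) (n : G) g.2 n.2]
      group
    rw [this]
    exact hn
  haveI := Sylow.characteristic_of_normal P hPnorm
  refine ⟨p, P.toSubgroup.map A.subtype, hp, inferInstance, ?_, (P.2).map A.subtype⟩
  intro hbot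
  rw [Subgroup.map_eq_bot_iff, Subgroup.ker_subtype] at hbot
  have hPbot : P.toSubgroup = ⊥ := le_bot_iff.mp hbot
  exact P.ne_bot_of_dvd_card hpdvd hPbot

theorem hall_exists : ∀ (n : ℕ) (G : Type u) [Group G] [Finite G] [Group.IsSolvable G],
    Nat.card G = n → ∀ a b : ℕ, Nat.Coprime a b → Nat.card G = a * b →
    ∃ H : Subgroup G, Nat.card H = a := by
  intro n
  induction n using Nat.strong_induction_on with
  | _ n ih =>
    intro G _ _ _ hn a b hab hcard
    rcases eq_or_ne a 1 with rfl | ha1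
    · exact ⟨⊥, Subgroup.card_bot⟩
    have hGpos : 0 < Nat.card G := Nat.card_pos
    have ha0 : a ≠ 0 := by rintro rfl; rw [zero_mul] at hcard; omega
    have hb0 : b ≠ 0 := by rintro rfl; rw [mul_zero] at hcard; omega
    have hG1 : 1 < Nat.card G := by
      rw [hcard]; exact Nat.one_lt_mul_iff.mpr ⟨by omega, by omega, Or.inl (by omega)⟩
    haveI : Nontrivial G := Finite.one_lt_card_iff_nontrivial.mp hG1
    obtain ⟨p, N, hp, hNnorm, hNbot, hNp⟩ := exists_normal_pgroup G
    haveI := hNnorm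
    haveI : Fact p.Prime := ⟨hp⟩
    set c := Nat.card N with hcdef
    have hc1 : 1 < c := N.one_lt_card_iff_ne_bot.mpr hNbot
    obtain ⟨kk, hkk⟩ := hNp.exists_card_eq
    have hpc : p ∣ c := by
      rw [hcdef, hkk] at hc1 ⊢
      exact dvd_pow_self p (fun h => by simp [h] at hc1)
    have hcdvd : c ∣ a * b := hcard ▸ Subgroup.card_subgroup_dvd_card N
    have hNindex : c * N.index = a * b := by
      rw [hcdef, ← hcard]; exact N.card_mul_index
    have hQcard : Nat.card (G ⧸ N) = N.index := rfl
    have hQlt : Nat.card (G ⧸ N) < n := by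
      rw [← hn]
      calc Nat.card (G ⧸ N) = 1 * N.index := (one_mul _).symm
      _ < c * N.index := by
        have h0 : N.index ≠ 0 := Subgroup.index_ne_zero_of_finite
        exact (Nat.mul_lt_mul_right (Nat.pos_of_ne_zero h0)).mpr hc1
      _ = Nat.card G := N.card_mul_index
    rcases (Nat.Prime.dvd_mul hp).mp (hpc.trans hcdvd) with hpa | hpb
    · -- c ∣ a, pass to quotient
      have hck : c = p ^ kk := hcdef.trans hkk
      have hcb : Nat.Coprime c b := by
        rw [hck]
        exact Nat.Coprime.pow_left _ (Nat.Coprime.coprime_dvd_left hpa hab)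
      have hca : c ∣ a := (Nat.Coprime.dvd_of_dvd_mul_right hcb) hcdvd
      have hidx : N.index = (a / c) * b := by
        have : c * N.index = c * ((a / c) * b) := by
          rw [hNindex, ← mul_assoc, Nat.mul_div_cancel' hca]
        exact Nat.eq_of_mul_eq_mul_left (by omega) this
      obtain ⟨H', hH'⟩ := ih (Nat.card (G ⧸ N)) hQlt (G ⧸ N) rfl (a / c) b
        (Nat.Coprime.coprime_dvd_left (Nat.div_dvd_of_dvd hca) hab)
        (hQcard.trans hidx)
      refine ⟨H'.comap (QuotientGroup.mk' N), ?_⟩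
      have hsurj : Function.Surjective (QuotientGroup.mk' N) := QuotientGroup.mk'_surjective N
      have hidx2 : (H'.comap (QuotientGroup.mk' N)).index = H'.index :=
        H'.index_comap_of_surjective hsurj
      have hH'idx : H'.index = b := by
        have h1 : Nat.card H' * H'.index = (a / c) * b := by
          rw [Subgroup.card_mul_index, hQcard, hidx]
        rw [hH'] at h1
        have hac0 : a / c ≠ 0 := by
          have := Nat.div_pos (Nat.le_of_dvd (by omega) hca) (by omega); omega
        exact Nat.eq_of_mul_eq_mul_left (by omega) h1
      have h2 : Nat.card (H'.comap (QuotientGroup.mk' N)) * (H'.comap (QuotientGroup.mk' N)).index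
          = a * b := by rw [Subgroup.card_mul_index, hcard]
      rw [hidx2, hH'idx] at h2
      exact Nat.eq_of_mul_eq_mul_right (by omega) h2
    · -- c ∣ b, quotient + Schur-Zassenhaus
      have hck : c = p ^ kk := hcdef.trans hkk
      have hca : Nat.Coprime c a := by
        rw [hck]
        exact Nat.Coprime.pow_left _ (Nat.Coprime.coprime_dvd_left hpb hab.symm)
      have hcb : c ∣ b := (Nat.Coprime.dvd_of_dvd_mul_left hca) hcdvd
      have hidx : N.index = a * (b / c) := by
        have : c * N.index = c * (a * (b / c)) := by
          rw [hNindex, mul_left_comm, Nat.mul_div_cancel' hcb]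
        exact Nat.eq_of_mul_eq_mul_left (by omega) this
      obtain ⟨H', hH'⟩ := ih (Nat.card (G ⧸ N)) hQlt (G ⧸ N) rfl a (b / c)
        (Nat.Coprime.coprime_dvd_right (Nat.div_dvd_of_dvd hcb) hab)
        (hQcard.trans hidx)
      set K := H'.comap (QuotientGroup.mk' N) with hKdef
      have hsurj : Function.Surjective (QuotientGroup.mk' N) := QuotientGroup.mk'_surjective N
      have hidx2 : K.index = H'.index := H'.index_comap_of_surjective hsurj
      have hH'idx : H'.index = b / c := by
        have h1 : Nat.card H' * H'.index = a * (b / c) := by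
          rw [Subgroup.card_mul_index, hQcard, hidx]
        rw [hH'] at h1
        exact Nat.eq_of_mul_eq_mul_left (by omega) h1
      have hbc0 : b / c ≠ 0 := by
        have := Nat.div_pos (Nat.le_of_dvd (by omega) hcb) (by omega); omega
      have hKcard : Nat.card K = a * c := by
        have h2 : Nat.card K * K.index = a * b := by rw [Subgroup.card_mul_index, hcard]
        rw [hidx2, hH'idx] at h2
        have h3 : a * b = (a * c) * (b / c) := by
          rw [mul_assoc, Nat.mul_div_cancel' hcb]
        rw [h3] at h2
        exact Nat.eq_of_mul_eq_mul_right (by omega) h2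
      have hNK : N ≤ K := fun x hx => by
        have hx1 : (QuotientGroup.mk' N) x = 1 := (QuotientGroup.eq_one_iff x).mpr hx
        show x ∈ Subgroup.comap (QuotientGroup.mk' N) H'
        rw [Subgroup.mem_comap, hx1]
        exact H'.one_mem
      set N' := N.subgroupOf K with hN'def
      haveI : N'.Normal := hNnorm.subgroupOf K
      have hN'card : Nat.card N' = c := Nat.card_congr (Subgroup.subgroupOfEquivOfLe hNK).toEquiv
      have hN'idx : N'.index = a := by
        have h1 : Nat.card N' * N'.index = a * c := by
          rw [Subgroup.card_mul_index, hKcard]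
        rw [hN'card, mul_comm a c] at h1
        exact Nat.eq_of_mul_eq_mul_left (by omega) h1
      have hcop : Nat.Coprime (Nat.card N') N'.index := by
        rw [hN'card, hN'idx]; exact hca
      obtain ⟨C, hC⟩ := Subgroup.exists_right_complement'_of_coprime hcop
      have hCcard : Nat.card C = a := by
        have h1 : Nat.card N' * Nat.card C = a * c := by
          rw [hC.card_mul, hKcard]
        rw [hN'card, mul_comm a c] at h1
        exact Nat.eq_of_mul_eq_mul_left (by omega) h1
      refine ⟨C.map K.subtype, ?_⟩
      rw [← hCcard]
      exact Nat.card_congr (Subgroup.equivMapOfInjective C K.subtype K.subtype_injective).toEquiv.symm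

theorem solvable_hall_complement {G : Type*} [Group G] [Finite G] [Group.IsSolvable G]
    (a b : ℕ) (hab : Nat.Coprime a b) (hcard : Nat.card G = a * b) :
    ∃ H K : Subgroup G, Nat.card H = a ∧ Nat.card K = b ∧ H ⊓ K = ⊥ ∧
      (↑H * ↑K : Set G) = Set.univ := by
  obtain ⟨H, hH⟩ := hall_exists (Nat.card G) G rfl a b hab hcard
  obtain ⟨K, hK⟩ := hall_exists (Nat.card G) G rfl b a hab.symm (by rw [hcard, mul_comm])
  have hcomp : Subgroup.IsComplement' H K :=
    Subgroup.isComplement'_of_coprime (by rw [hH, hK, hcard]) (by rw [hH, hK]; exact hab)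
  exact ⟨H, K, hH, hK, disjoint_iff.mp hcomp.disjoint, hcomp.mul_eq⟩
end

section
/- Let ι, κ, μ be finite index sets, let d : ι → ℕ, e : κ → ℕ, f : μ → ℕ, and let n : ι → μ → ℕ and m : κ → μ → ℕ. Let h, k, g be natural numbers and α ≥ 1 a real number. Assume: (a) (d i)² ≤ h for all i ∈ ι; (b) (e j)² ≤ k for all j ∈ κ; (c) ∑_{i ∈ ι} d i * n i l = f l for all l ∈ μ; (d) ∑_{j ∈ κ} e j * m j l = f l for all l ∈ μ; and (e) ∑_{l ∈ μ} (f l)² = g. Then ∑_{i ∈ ι} ∑_{j ∈ κ} ((d i * e j : ℕ) : ℝ)^α * (∑_{l ∈ μ} n i l * m j l : ℕ) ≤ (h : ℝ)^{(α−1)/2} * (k : ℝ)^{(α−1)/2} * (g : ℝ). -/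
private lemma rpow_aux (x C α : ℝ) (hx : 0 ≤ x) (hC : 0 ≤ C) (hα : 1 ≤ α)
    (hxC : x ^ (α - 1) ≤ C) : x ^ α ≤ C * x := by
  rcases hx.eq_or_lt with h0 | h0
  · rw [← h0, Real.zero_rpow (by linarith), mul_zero]
  · have : x ^ α = x ^ (α - 1) * x := by
      rw [← Real.rpow_add_one h0.ne']; ring_nf
    rw [this]
    exact mul_le_mul_of_nonneg_right hxC hx

theorem lifting_multiplicity_bound {ι κ μ : Type*} [Fintype ι] [Fintype κ] [Fintype μ]
    (d : ι → ℕ) (e : κ → ℕ) (f : μ → ℕ) (n : ι → μ → ℕ) (m : κ → μ → ℕ)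
    (h k g : ℕ) (α : ℝ) (hα : 1 ≤ α)
    (ha : ∀ i, (d i) ^ 2 ≤ h) (hb : ∀ j, (e j) ^ 2 ≤ k)
    (hc : ∀ l, ∑ i, d i * n i l = f l)
    (hd : ∀ l, ∑ j, e j * m j l = f l)
    (he : ∑ l, (f l) ^ 2 = g) :
    ∑ i, ∑ j, ((d i * e j : ℕ) : ℝ) ^ α * ((∑ l, n i l * m j l : ℕ) : ℝ) ≤
      (h : ℝ) ^ ((α - 1) / 2) * (k : ℝ) ^ ((α - 1) / 2) * (g : ℝ) := by
  set C : ℝ := (h : ℝ) ^ ((α - 1) / 2) * (k : ℝ) ^ ((α - 1) / 2) with hCdef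
  have hC : 0 ≤ C := by positivity
  -- key natural-number identity
  have key : ∑ i, ∑ j, (d i * e j) * (∑ l, n i l * m j l) = g := by
    rw [← he]
    have step : ∀ l, (f l) ^ 2 = ∑ i, ∑ j, (d i * e j) * (n i l * m j l) := by
      intro l
      rw [sq]
      nth_rewrite 1 [← hc l]
      rw [← hd l, Finset.sum_mul_sum]
      exact Finset.sum_congr rfl fun i _ => Finset.sum_congr rfl fun j _ => by ring
    calc ∑ i, ∑ j, (d i * e j) * (∑ l, n i l * m j l)
        = ∑ i, ∑ j, ∑ l, (d i * e j) * (n i l * m j l) := by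
          simp_rw [Finset.mul_sum]
      _ = ∑ i, ∑ l, ∑ j, (d i * e j) * (n i l * m j l) :=
          Finset.sum_congr rfl fun i _ => Finset.sum_comm
      _ = ∑ l, ∑ i, ∑ j, (d i * e j) * (n i l * m j l) := Finset.sum_comm
      _ = ∑ l, (f l) ^ 2 := Finset.sum_congr rfl fun l _ => (step l).symm
  have hterm : ∀ i j, ((d i * e j : ℕ) : ℝ) ^ α * ((∑ l, n i l * m j l : ℕ) : ℝ) ≤
      C * (((d i * e j) * (∑ l, n i l * m j l) : ℕ) : ℝ) := by
    intro i j
    push_cast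
    rw [← mul_assoc]
    refine mul_le_mul_of_nonneg_right ?_ (by positivity)
    have hx : (0 : ℝ) ≤ (d i : ℝ) * (e j : ℝ) := by positivity
    refine rpow_aux _ _ _ hx hC hα ?_
    have hsq : ((d i : ℝ) * (e j : ℝ)) ^ 2 ≤ (h : ℝ) * (k : ℝ) := by
      rw [mul_pow]
      have h1 : ((d i : ℝ)) ^ 2 ≤ (h : ℝ) := by exact_mod_cast ha i
      have h2 : ((e j : ℝ)) ^ 2 ≤ (k : ℝ) := by exact_mod_cast hb j
      exact mul_le_mul h1 h2 (by positivity) (by positivity)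
    have hle : (d i : ℝ) * (e j : ℝ) ≤ Real.sqrt ((h : ℝ) * (k : ℝ)) :=
      (Real.le_sqrt hx (by positivity)).mpr hsq
    calc ((d i : ℝ) * (e j : ℝ)) ^ (α - 1)
        ≤ (Real.sqrt ((h : ℝ) * (k : ℝ))) ^ (α - 1) :=
          Real.rpow_le_rpow hx hle (by linarith)
      _ = C := by
          rw [Real.sqrt_eq_rpow, ← Real.rpow_mul (by positivity), hCdef,
            ← Real.mul_rpow (by positivity) (by positivity)]
          ring_nf
  calc ∑ i, ∑ j, ((d i * e j : ℕ) : ℝ) ^ α * ((∑ l, n i l * m j l : ℕ) : ℝ)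
      ≤ ∑ i, ∑ j, C * (((d i * e j) * (∑ l, n i l * m j l) : ℕ) : ℝ) :=
        Finset.sum_le_sum fun i _ => Finset.sum_le_sum fun j _ => hterm i j
    _ = C * ((∑ i, ∑ j, (d i * e j) * (∑ l, n i l * m j l) : ℕ) : ℝ) := by
        simp_rw [← Finset.mul_sum]; push_cast; ring
    _ = C * g := by rw [key]
    _ = (h : ℝ) ^ ((α - 1) / 2) * (k : ℝ) ^ ((α - 1) / 2) * (g : ℝ) := rfl
end
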